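/- Let G = C_n be a cycle (n ≥ 3) and L a list-assignment with |L(v)| ≥ 3 for all v. If the lists are not all identical, and α, β are proper L-colourings each having at least one unfrozen vertex, then α can be transformed into β by a sequence of single-vertex recolourings through proper L-colourings. -/

import Mathlib

/-- A proper list colouring. -/
def properL {V : Type*} (G : SimpleGraph V) (L : V → Finset ℕ) (c : V → ℕ) : Prop :=
  (∀ v, c v ∈ L v) ∧ ∀ ⦃u w⦄, G.Adj u w → c u ≠ c w

/-- Vertex `v` is unfrozen under `c`. -/
def unfrozenAt {V : Type*} (G : SimpleGraph V) (L : V → Finset ℕ) (c : V → ℕ) (v : V) : Prop :=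
  ∃ b ∈ L v, b ≠ c v ∧ ∀ u, G.Adj v u → c u ≠ b

/-- A single-vertex recolouring step between proper `L`-colourings. -/
def recolStep {V : Type*} (G : SimpleGraph V) (L : V → Finset ℕ) (c c' : V → ℕ) : Prop :=
  properL G L c ∧ properL G L c' ∧ ∃ x, c x ≠ c' x ∧ ∀ u, u ≠ x → c u = c' u

section Helpers

variable {V : Type*}

lemma step_update [DecidableEq V] (G : SimpleGraph V) (L : V → Finset ℕ) {c : V → ℕ}
    (hc : properL G L c) {x : V} {s : ℕ} (hs : s ∈ L x) (hne : s ≠ c x)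
    (hnb : ∀ u, G.Adj x u → c u ≠ s) :
    recolStep G L c (Function.update c x s) ∧ properL G L (Function.update c x s) := by
  have hp : properL G L (Function.update c x s) := by
    constructor
    · intro v; by_cases hv : v = x
      · subst hv; simpa using hs
      · rw [Function.update_of_ne hv]; exact hc.1 v
    · intro u w huw
      by_cases hu : u = x
      · subst hu
        rw [Function.update_self, Function.update_of_ne huw.ne']
        exact (hnb w huw).symm
      · by_cases hw : w = x
        · subst hw
          rw [Function.update_of_ne hu, Function.update_self]
          exact hnb u huw.symm
        · rw [Function.update_of_ne hu, Function.update_of_ne hw]; exact hc.2 huw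
  refine ⟨⟨hc, hp, x, ?_, ?_⟩, hp⟩
  · rw [Function.update_self]; exact hne.symm
  · intro u hu; rw [Function.update_of_ne hu]

lemma tight (L' : Finset ℕ) (h3 : 3 ≤ L'.card) {x y z : ℕ}
    (h : ∀ s ∈ L', s = x ∨ s = y ∨ s = z) :
    L' = {x, y, z} ∧ x ≠ y ∧ x ≠ z ∧ y ≠ z := by
  have hsub : L' ⊆ {x, y, z} := by
    intro s hs
    simp only [Finset.mem_insert, Finset.mem_singleton]
    exact h s hs
  have hle2 : ∀ u v : ℕ, L' ⊆ {u, v} → False := by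
    intro u v hs
    have h1 := Finset.card_le_card hs
    have h2 : ({u, v} : Finset ℕ).card ≤ 2 := (Finset.card_insert_le _ _).trans (by simp)
    omega
  have hxy : x ≠ y := by
    rintro rfl
    exact hle2 x z (by intro s hs; rcases h s hs with h'|h'|h' <;> simp [h'])
  have hxz : x ≠ z := by
    rintro rfl
    exact hle2 x y (by intro s hs; rcases h s hs with h'|h'|h' <;> simp [h'])
  have hyz : y ≠ z := by
    rintro rfl
    exact hle2 x y (by intro s hs; rcases h s hs with h'|h'|h' <;> simp [h'])
  have hcard : ({x, y, z} : Finset ℕ).card ≤ L'.card := by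
    have h1 := Finset.card_insert_le x ({y, z} : Finset ℕ)
    have h2 := Finset.card_insert_le y ({z} : Finset ℕ)
    simp only [Finset.card_singleton] at h1 h2 ⊢
    omega
  exact ⟨Finset.eq_of_subset_of_card_le hsub hcard, hxy, hxz, hyz⟩

lemma pick2 (L' : Finset ℕ) (h3 : 3 ≤ L'.card) (x y : ℕ) :
    ∃ s ∈ L', s ≠ x ∧ s ≠ y := by
  by_contra hcon
  push_neg at hcon
  have hsub : L' ⊆ {x, y} := by
    intro s hs
    simp only [Finset.mem_insert, Finset.mem_singleton]
    by_cases h1 : s = x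
    · exact Or.inl h1
    · exact Or.inr (hcon s hs h1)
  have h1 := Finset.card_le_card hsub
  have h2 : ({x, y} : Finset ℕ).card ≤ 2 := (Finset.card_insert_le _ _).trans (by simp)
  omega

lemma frozen_char (G : SimpleGraph V) (L : V → Finset ℕ) {c : V → ℕ} {v x y : V}
    (hc : properL G L c) (hnb : G.neighborSet v = {x, y}) (h3 : 3 ≤ (L v).card)
    (hfr : ¬ unfrozenAt G L c v) :
    L v = {c x, c v, c y} ∧ c x ≠ c v ∧ c x ≠ c y ∧ c v ≠ c y := by
  unfold unfrozenAt at hfr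
  push_neg at hfr
  apply tight (L v) h3
  intro s hs
  by_cases hsv : s = c v
  · exact Or.inr (Or.inl hsv)
  · obtain ⟨u, hu, hcu⟩ := hfr s hs hsv
    have : u ∈ G.neighborSet v := hu
    rw [hnb] at this
    rcases this with h | h
    · subst h; exact Or.inl hcu.symm
    · rw [Set.mem_singleton_iff] at h; subst h; exact Or.inr (Or.inr hcu.symm)

lemma exists_other {V : Type*} [Fintype V] {G : SimpleGraph V}
    (hreg : ∀ v, (G.neighborSet v).ncard = 2) {x y : V} (h : G.Adj x y) :
    ∃ z, z ≠ x ∧ G.neighborSet y = {x, z} := by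
  obtain ⟨a, b, hab, hset⟩ := Set.ncard_eq_two.mp (hreg y)
  have hx : x ∈ G.neighborSet y := h.symm
  rw [hset] at hx
  rcases hx with hx | hx
  · subst hx; exact ⟨b, hab.symm, hset⟩
  · rw [Set.mem_singleton_iff] at hx; subst hx
    exact ⟨a, hab, by rw [hset, Set.pair_comm]⟩

end Helpers

/-- Context: `f` enumerates the cycle, with period `m`, and `a ∈ L (f 0) \ L (f 1)`. -/
structure CycleCtx {V : Type*} (G : SimpleGraph V) (L : V → Finset ℕ)
    (f : ℕ → V) (m : ℕ) (a : ℕ) : Prop where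
  hm : 3 ≤ m
  hadj : ∀ k, G.Adj (f k) (f (k+1))
  hnbr : ∀ k, G.neighborSet (f (k+1)) = {f k, f (k+2)}
  hne2 : ∀ k, f (k+2) ≠ f k
  hper : ∀ k, f (k+m) = f k
  hinj : ∀ i j, i < m → j < m → f i = f j → i = j
  hsurj : ∀ v, ∃ k, k < m ∧ f k = v
  hL3 : ∀ v, 3 ≤ (L v).card
  haL : a ∈ L (f 0)
  haN : a ∉ L (f 1)

namespace CycleCtx

variable {V : Type*} {G : SimpleGraph V} {L : V → Finset ℕ} {f : ℕ → V} {m a : ℕ}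

lemma fm0 (C : CycleCtx G L f m a) : f m = f 0 := by
  have := C.hper 0; simpa using this

lemma fne (C : CycleCtx G L f m a) {i j : ℕ} (hi : i < m) (hj : j < m) (h : i ≠ j) :
    f i ≠ f j := fun he => h (C.hinj i j hi hj he)

/-- `f j ≠ f i` for `i < j ≤ m`, `0 < i` (treating `f m = f 0`). -/
lemma fne' (C : CycleCtx G L f m a) {i j : ℕ} (hi : 0 < i) (hij : i < j) (hj : j ≤ m) :
    f j ≠ f i := by
  rcases Nat.lt_or_ge j m with h | h
  · exact C.fne h (lt_trans hij h) (by omega)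
  · have hjm : j = m := le_antisymm hj h
    subst hjm
    rw [C.fm0]
    exact C.fne (by omega) (by omega) (by omega)

end CycleCtx

section Cycle

lemma cycle_exists {V : Type*} [Fintype V] {G : SimpleGraph V}
    (hG : G.Connected) (hreg : ∀ v, (G.neighborSet v).ncard = 2)
    {p q : V} (hpq : G.Adj p q) :
    ∃ (m : ℕ) (f : ℕ → V), 3 ≤ m ∧ f 0 = p ∧ f 1 = q ∧
      (∀ k, G.Adj (f k) (f (k+1))) ∧
      (∀ k, G.neighborSet (f (k+1)) = {f k, f (k+2)}) ∧
      (∀ k, f (k+2) ≠ f k) ∧ (∀ k, f (k+m) = f k) ∧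
      (∀ i j, i < m → j < m → f i = f j → i = j) ∧
      (∀ v, ∃ k, k < m ∧ f k = v) := by
  classical
  set D := {e : V × V // G.Adj e.1 e.2} with hD
  have hoth : ∀ e : D, ∃ z, z ≠ e.1.1 ∧ G.neighborSet e.1.2 = {e.1.1, z} :=
    fun e => exists_other hreg e.2
  choose oth hz hset using hoth
  have hadjS : ∀ e : D, G.Adj e.1.2 (oth e) := by
    intro e
    have : oth e ∈ G.neighborSet e.1.2 := by rw [hset e]; exact Or.inr rfl
    exact this
  set S : D → D := fun e => ⟨(e.1.2, oth e), hadjS e⟩ with hS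
  have Sinj : Function.Injective S := by
    intro e e' h
    have h1 : e.1.2 = e'.1.2 := congrArg (fun t => t.1.1) h
    have h2 : oth e = oth e' := congrArg (fun t => t.1.2) h
    have hs1 := hset e
    have hs2 := hset e'
    rw [h1, h2] at hs1
    rw [hs1] at hs2
    have : e.1.1 ∈ ({e'.1.1, oth e'} : Set V) := by rw [← hs2]; exact Or.inl rfl
    rcases this with h3 | h3
    · apply Subtype.ext; apply Prod.ext h3 h1
    · rw [Set.mem_singleton_iff] at h3
      exact absurd h3.symm ((h2 ▸ hz e))
  set e0 : D := ⟨(p, q), hpq⟩ with he0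
  set es : ℕ → D := fun k => S^[k] e0 with hes
  have hes_succ : ∀ k, es (k+1) = S (es k) := by
    intro k; simp only [hes]; rw [Function.iterate_succ_apply']
  set f : ℕ → V := fun k => (es k).1.1 with hf
  have hsnd : ∀ k, (es k).1.2 = f (k+1) := by
    intro k; rw [hf]; simp only; rw [hes_succ k]
  have hadjf : ∀ k, G.Adj (f k) (f (k+1)) := by
    intro k; rw [← hsnd k]; exact (es k).2
  have hf2 : ∀ k, f (k+2) = oth (es k) := by
    intro k
    have : es (k+1) = S (es k) := hes_succ k
    rw [← hsnd (k+1), this]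
  have hnbrf : ∀ k, G.neighborSet (f (k+1)) = {f k, f (k+2)} := by
    intro k
    rw [← hsnd k, hf2 k]
    exact hset (es k)
  have hne2f : ∀ k, f (k+2) ≠ f k := by
    intro k; rw [hf2 k]; exact hz (es k)
  -- periodicity
  have : ∃ i j : ℕ, i ≠ j ∧ es i = es j := by
    obtain ⟨i, j, hij, h⟩ := Finite.exists_ne_map_eq_of_infinite es
    exact ⟨i, j, hij, h⟩
  obtain ⟨i, j, hij, hesij⟩ := this
  have hret : ∃ d, 0 < d ∧ S^[d] e0 = e0 := by
    rcases Nat.lt_or_ge i j with h | h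
    · refine ⟨j - i, by omega, ?_⟩
      have : S^[i] (S^[j-i] e0) = S^[i] e0 := by
        rw [← Function.iterate_add_apply]
        have : i + (j - i) = j := by omega
        rw [this]; exact hesij.symm
      exact (Sinj.iterate i) this
    · have hij' : j < i := by omega
      refine ⟨i - j, by omega, ?_⟩
      have : S^[j] (S^[i-j] e0) = S^[j] e0 := by
        rw [← Function.iterate_add_apply]
        have : j + (i - j) = i := by omega
        rw [this]; exact hesij
      exact (Sinj.iterate j) this
  set m := Nat.find hret with hm
  obtain ⟨hm0, hmfix⟩ : 0 < m ∧ S^[m] e0 = e0 := Nat.find_spec hret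
  have hmin : ∀ d, 0 < d → d < m → S^[d] e0 ≠ e0 := by
    intro d hd0 hdm hfix
    exact Nat.find_min hret hdm ⟨hd0, hfix⟩
  have hperE : ∀ k, es (k + m) = es k := by
    intro k
    simp only [hes]
    rw [Function.iterate_add_apply, hmfix]
  have hperf : ∀ k, f (k + m) = f k := fun k => congrArg (fun e => e.1.1) (hperE k)
  -- m ≥ 3
  have hm3 : 3 ≤ m := by
    by_contra hlt
    push_neg at hlt
    interval_cases m
    · have h1 : f 1 = f 0 := by
        have := hperf 0; simpa using this
      exact (hadjf 0).ne' h1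
    · have h2 : f 2 = f 0 := by
        have := hperf 0; simpa using this
      exact hne2f 0 h2
  -- injectivity
  have pair_eq : ∀ {x z x' z' : V}, ({x, z} : Set V) = {x', z'} → x = x' → x ≠ z → x' ≠ z' →
      z = z' := by
    intro x z x' z' hst hxx hxz hxz'
    have : z ∈ ({x', z'} : Set V) := by rw [← hst]; exact Or.inr rfl
    rcases this with h | h
    · exact absurd (hxx ▸ h.symm) hxz
    · exact h
  have espair : ∀ k l, f k = f l → f (k+1) = f (l+1) → es k = es l := by
    intro k l h1 h2
    apply Subtype.ext
    apply Prod.ext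
    · exact h1
    · rw [hsnd k, hsnd l]; exact h2
  have esper : ∀ k d, 0 < d → d < m → es (k + d) = es k → False := by
    intro k d hd0 hdm he
    simp only [hes] at he
    rw [Function.iterate_add_apply] at he
    exact hmin d hd0 hdm ((Sinj.iterate k) he)
  have C1 : ∀ d b, 0 < d → d < m → 1 ≤ b → f (b + d) = f b → False := by
    intro d b hd0 hdm hb1 heq
    rcases Nat.lt_or_ge d 2 with hd2 | hd2
    · have hd1 : d = 1 := by omega
      subst hd1
      exact (hadjf b).ne' heq
    · obtain ⟨b', rfl⟩ : ∃ b', b = b' + 1 := ⟨b - 1, by omega⟩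
      have hsets : ({f b', f (b'+2)} : Set V) = {f (b'+d), f (b'+d+2)} := by
        have h1 := hnbrf b'
        have h2 := hnbrf (b' + d)
        rw [show b' + d + 1 = b' + 1 + d from by omega, heq] at h2
        rw [← h1, ← h2]
      by_cases hcase : f (b'+2) = f (b'+d+2)
      · -- same orientation: pair repeats
        have : es (b' + 1 + d) = es (b' + 1) := by
          apply espair
          · exact heq
          · rw [show b' + 1 + d + 1 = b' + d + 2 from by omega]
            rw [show b' + 1 + 1 = b' + 2 from by omega]
            exact hcase.symm
        exact esper (b'+1) d hd0 hdm this
      · -- reversed orientation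
        have hrev1 : f (b'+2) = f (b'+d) := by
          have : f (b'+2) ∈ ({f (b'+d), f (b'+d+2)} : Set V) := by
            rw [← hsets]; exact Or.inr rfl
          rcases this with h | h
          · exact h
          · exact absurd h hcase
        -- R k : f (b + d - k) = f (b + k), with b = b' + 1
        have R0 : f (b' + 1 + d - 0) = f (b' + 1 + 0) := by simpa using heq
        have R1 : f (b' + 1 + d - 1) = f (b' + 1 + 1) := by
          rw [show b' + 1 + d - 1 = b' + d from by omega,
              show b' + 1 + 1 = b' + 2 from by omega]
          exact hrev1.symm
        have rule : ∀ k, k + 2 ≤ d → f (b' + 1 + d - k) = f (b' + 1 + k) →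
            f (b' + 1 + d - (k+1)) = f (b' + 1 + (k+1)) →
            f (b' + 1 + d - (k+2)) = f (b' + 1 + (k+2)) := by
          intro k hk Rk Rk1
          have h1 := hnbrf (b' + 1 + k)
          rw [show b' + 1 + k + 1 = b' + 1 + (k+1) from by omega] at h1
          have h2 := hnbrf (b' + d - k - 1)
          rw [show b' + d - k - 1 + 1 = b' + 1 + d - (k+1) from by omega,
              show b' + d - k - 1 + 2 = b' + 1 + d - k from by omega, Rk1] at h2
          have hsets2 : ({f (b' + 1 + k), f (b' + 1 + k + 2)} : Set V) =
              {f (b' + d - k - 1), f (b' + 1 + d - k)} := by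
            rw [← h1, ← h2]
          rw [Set.pair_comm (f (b' + d - k - 1)) _] at hsets2
          have hz1 : f (b' + 1 + k) ≠ f (b' + 1 + k + 2) := (hne2f (b' + 1 + k)).symm
          have hz2 : f (b' + 1 + d - k) ≠ f (b' + d - k - 1) := by
            have := hne2f (b' + d - k - 1)
            rw [show b' + d - k - 1 + 2 = b' + 1 + d - k from by omega] at this
            exact this
          have hxx : f (b' + 1 + k) = f (b' + 1 + d - k) := Rk.symm
          have hout := pair_eq hsets2 hxx hz1 hz2
          rw [show b' + 1 + k + 2 = b' + 1 + (k+2) from by omega,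
              show b' + d - k - 1 = b' + 1 + d - (k+2) from by omega] at hout
          exact hout.symm
        have Rall : ∀ k, k + 1 ≤ d → f (b' + 1 + d - k) = f (b' + 1 + k) ∧
            f (b' + 1 + d - (k+1)) = f (b' + 1 + (k+1)) := by
          intro k
          induction k with
          | zero => intro h; exact ⟨R0, R1⟩
          | succ k ih =>
            intro h
            obtain ⟨Rk, Rk1⟩ := ih (by omega)
            exact ⟨Rk1, rule k (by omega) Rk Rk1⟩
        rcases Nat.even_or_odd d with ⟨e, he⟩ | ⟨e, he⟩
        · have he1 : 1 ≤ e := by omega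
          have hR := (Rall e (by omega)).2
          rw [show b' + 1 + d - (e+1) = b' + e from by omega,
              show b' + 1 + (e+1) = b' + e + 2 from by omega] at hR
          exact hne2f (b' + e) hR.symm
        · have hR := (Rall e (by omega)).2
          rw [show b' + 1 + d - (e+1) = b' + 1 + e from by omega,
              show b' + 1 + (e+1) = b' + 1 + e + 1 from by omega] at hR
          exact (hadjf (b' + 1 + e)).ne hR
  have hinjf : ∀ i j, i < m → j < m → f i = f j → i = j := by
    have key : ∀ i j, i < j → j < m → f i = f j → False := by
      intro i j hij hjm heq
      apply C1 (j - i) (i + m) (by omega) (by omega) (by omega)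
      rw [show i + m + (j - i) = j + m from by omega, hperf j, hperf i]
      exact heq.symm
    intro i j hi hj heq
    rcases Nat.lt_trichotomy i j with h | h | h
    · exact absurd heq (fun he => key i j h hj he)
    · exact h
    · exact absurd heq.symm (fun he => key j i h hi he)
  -- surjectivity
  have hmodf : ∀ k, f k = f (k % m) := by
    intro k
    induction k using Nat.strong_induction_on with
    | _ k ih =>
      rcases Nat.lt_or_ge k m with h | h
      · rw [Nat.mod_eq_of_lt h]
      · have h1 : f k = f (k - m) := by
          have := hperf (k - m)
          rw [show k - m + m = k from by omega] at this
          exact this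

        rw [h1, ih (k - m) (by omega)]
        congr 1
        exact (Nat.mod_eq_sub_mod h).symm
  have hf0 : f 0 = p := rfl
  have hreach : ∀ v, ∃ k, f k = v := by
    suffices H : ∀ (x y : V) (w : G.Walk x y), (∃ k, f k = x) → ∃ k, f k = y by
      intro v
      obtain ⟨w⟩ := hG.preconnected p v
      exact H p v w ⟨0, hf0⟩
    intro x y w
    induction w with
    | nil => exact id
    | @cons x b y h' w' ih =>
      rintro ⟨k, hk⟩
      apply ih
      have hbk : b ∈ G.neighborSet (f (k + m)) := by
        rw [hperf k, hk]; exact h'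
      rw [show k + m = (k + m - 1) + 1 from by omega, hnbrf (k + m - 1)] at hbk
      rcases hbk with h | h
      · exact ⟨k + m - 1, h.symm⟩
      · exact ⟨k + m - 1 + 2, h.symm⟩
  have hsurjf : ∀ v, ∃ k, k < m ∧ f k = v := by
    intro v
    obtain ⟨k, hk⟩ := hreach v
    exact ⟨k % m, Nat.mod_lt _ hm0, by rw [← hmodf k]; exact hk⟩
  have hf1 : f 1 = q := by
    rw [← hsnd 0]
    rfl
  exact ⟨m, f, hm3, hf0, hf1, hadjf, hnbrf, hne2f, hperf, hinjf, hsurjf⟩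

end Cycle

namespace CycleCtx

variable {V : Type*} {G : SimpleGraph V} {L : V → Finset ℕ} {f : ℕ → V} {m a : ℕ}

lemma nbhd (C : CycleCtx G L f m a) (k : ℕ) :
    ∀ u, G.Adj (f (k+1)) u → u = f k ∨ u = f (k+2) := by
  intro u hu
  have h : u ∈ G.neighborSet (f (k+1)) := hu
  rw [C.hnbr k, Set.mem_insert_iff, Set.mem_singleton_iff] at h
  exact h

end CycleCtx

section MainLemmas

variable {V : Type*} [DecidableEq V] {G : SimpleGraph V} {L : V → Finset ℕ}
  {f : ℕ → V} {m a : ℕ}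

lemma lemB (C : CycleCtx G L f m a) :
    ∀ i, i + 3 ≤ m → ∀ (c : V → ℕ) (fbd : ℕ), properL G L c → c (f 0) = a →
    ∃ c', Relation.ReflTransGen (recolStep G L) c c' ∧ properL G L c' ∧
      c' (f (i+1)) ≠ fbd ∧ ∀ j, i + 1 < j → j ≤ m → c' (f j) = c (f j) := by
  intro i
  induction i with
  | zero =>
    intro h3 c fbd hc hc0
    simp only [Nat.zero_add] at h3 ⊢
    by_cases hcf : c (f 1) = fbd
    · obtain ⟨s, hsL, hs1, hs2⟩ := pick2 (L (f 1)) (C.hL3 (f 1)) fbd (c (f 2))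
      have hsa : s ≠ a := fun he => C.haN (he ▸ hsL)
      have hnb : ∀ u, G.Adj (f 1) u → c u ≠ s := by
        intro u hu
        rcases C.nbhd 0 u hu with rfl | rfl
        · rw [hc0]; exact hsa.symm
        · exact hs2.symm
      have hsc : s ≠ c (f 1) := by rw [hcf]; exact hs1
      obtain ⟨hstep, hp⟩ := step_update G L hc hsL hsc hnb
      refine ⟨Function.update c (f 1) s, .single hstep, hp, ?_, ?_⟩
      · rw [Function.update_self]; exact hs1
      · intro j hj1 hjm
        rw [Function.update_of_ne (C.fne' (by omega) hj1 hjm)]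
    · exact ⟨c, .refl, hc, hcf, fun j _ _ => rfl⟩
  | succ i ih =>
    intro h3 c fbd hc hc0
    by_cases hcf : c (f (i+1+1)) = fbd
    case neg => exact ⟨c, .refl, hc, hcf, fun _ _ _ => rfl⟩
    case pos =>
    by_cases hex : ∃ s ∈ L (f (i+1+1)), s ≠ fbd ∧ s ≠ c (f (i+1)) ∧ s ≠ c (f (i+1+2))
    · obtain ⟨s, hsL, hs1, hs2, hs3⟩ := hex
      have hnb : ∀ u, G.Adj (f (i+1+1)) u → c u ≠ s := by
        intro u hu
        rcases C.nbhd (i+1) u hu with rfl | rfl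
        · exact hs2.symm
        · exact hs3.symm
      have hsc : s ≠ c (f (i+1+1)) := by rw [hcf]; exact hs1
      obtain ⟨hstep, hp⟩ := step_update G L hc hsL hsc hnb
      refine ⟨_, .single hstep, hp, ?_, ?_⟩
      · rw [Function.update_self]; exact hs1
      · intro j hj hjm
        rw [Function.update_of_ne (C.fne' (by omega) hj hjm)]
    · push_neg at hex
      obtain ⟨hLeq, hd1, hd2, hd3⟩ := tight (L (f (i+1+1))) (C.hL3 _)
        (x := fbd) (y := c (f (i+1))) (z := c (f (i+1+2)))
        (by intro s hs
            by_cases h1 : s = fbd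
            · exact Or.inl h1
            · by_cases h2 : s = c (f (i+1))
              · exact Or.inr (Or.inl h2)
              · exact Or.inr (Or.inr (hex s hs h1 h2)))
      obtain ⟨c₁, hrtg1, hp1, hne1, hag1⟩ := ih (by omega) c (c (f (i+1))) hc hc0
      have hsL : c (f (i+1)) ∈ L (f (i+1+1)) := by rw [hLeq]; simp
      have hc1i : c₁ (f (i+1+1)) = fbd := by
        rw [hag1 (i+1+1) (by omega) (by omega)]; exact hcf
      have hsc : c (f (i+1)) ≠ c₁ (f (i+1+1)) := by rw [hc1i]; exact hd1.symm
      have hnb : ∀ u, G.Adj (f (i+1+1)) u → c₁ u ≠ c (f (i+1)) := by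
        intro u hu
        rcases C.nbhd (i+1) u hu with rfl | rfl
        · exact hne1
        · rw [hag1 (i+1+2) (by omega) (by omega)]
          exact hd3.symm
      obtain ⟨hstep, hp2⟩ := step_update G L hp1 hsL hsc hnb
      refine ⟨_, hrtg1.trans (.single hstep), hp2, ?_, ?_⟩
      · rw [Function.update_self]; exact hd1.symm
      · intro j hj hjm
        rw [Function.update_of_ne (C.fne' (by omega) hj hjm), hag1 j (by omega) hjm]

lemma lemA (C : CycleCtx G L f m a) :
    ∀ k, k + 1 ≤ m → ∀ c d, properL G L c → properL G L d → c (f 0) = a → d (f 0) = a →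
    (∀ j, k < j → j ≤ m → c (f j) = d (f j)) →
    Relation.ReflTransGen (recolStep G L) c d := by
  intro k
  induction k with
  | zero =>
    intro _ c d hc hd hc0 hd0 hag
    have hcd : c = d := by
      funext v
      obtain ⟨j, hj, rfl⟩ := C.hsurj v
      rcases Nat.eq_zero_or_pos j with rfl | hj0
      · rw [hc0, hd0]
      · exact hag j hj0 (by omega)
    rw [hcd]
  | succ k ih =>
    intro hk c d hc hd hc0 hd0 hag
    by_cases heq : c (f (k+1)) = d (f (k+1))
    · apply ih (by omega) c d hc hd hc0 hd0
      intro j hj hjm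
      rcases (Nat.succ_le_of_lt hj).eq_or_lt with h | h
      · rw [← h]; exact heq
      · exact hag j h hjm
    · have hobt : ∃ c₁, Relation.ReflTransGen (recolStep G L) c c₁ ∧ properL G L c₁ ∧
          c₁ (f k) ≠ d (f (k+1)) ∧ ∀ j, k < j → j ≤ m → c₁ (f j) = c (f j) := by
        rcases Nat.eq_zero_or_pos k with rfl | hk0
        · refine ⟨c, .refl, hc, ?_, fun _ _ _ => rfl⟩
          rw [hc0]
          intro he
          apply C.haN
          rw [he]
          exact hd.1 _
        · obtain ⟨i, rfl⟩ : ∃ i, k = i + 1 := ⟨k - 1, by omega⟩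
          exact lemB C i (by omega) c (d (f (i+1+1))) hc hc0
      obtain ⟨c₁, hrtg1, hp1, hne1, hag1⟩ := hobt
      have htL : d (f (k+1)) ∈ L (f (k+1)) := hd.1 _
      have htc : d (f (k+1)) ≠ c₁ (f (k+1)) := by
        rw [hag1 (k+1) (by omega) (by omega)]
        exact fun he => heq he.symm
      have hnb : ∀ u, G.Adj (f (k+1)) u → c₁ u ≠ d (f (k+1)) := by
        intro u hu
        rcases C.nbhd k u hu with rfl | rfl
        · exact hne1
        · rw [hag1 (k+2) (by omega) (by omega), hag (k+2) (by omega) (by omega)]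
          exact (hd.2 (C.hadj (k+1))).symm
      obtain ⟨hstep, hp2⟩ := step_update G L hp1 htL htc hnb
      apply (hrtg1.trans (Relation.ReflTransGen.single hstep)).trans
      apply ih (by omega) _ d hp2 hd ?_ hd0 ?_
      · have h1 : c₁ (f 0) = a := by
          have h := hag1 m (by omega) le_rfl
          rw [C.fm0] at h
          rw [h, hc0]
        rw [Function.update_of_ne (C.fne (by omega) (by omega) (by omega)), h1]
      · intro j hj hjm
        rcases (Nat.succ_le_of_lt hj).eq_or_lt with h | h
        · rw [← h, Function.update_self]
        · rw [Function.update_of_ne (C.fne' (by omega) h hjm), hag1 j (by omega) hjm,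
              hag j h hjm]

lemma lemE (C : CycleCtx G L f m a) :
    ∀ t, t < m → ∀ c, properL G L c → unfrozenAt G L c (f (2*m - 1 - t)) →
    ∃ c', Relation.ReflTransGen (recolStep G L) c c' ∧ properL G L c' ∧
      c' (f (m-1)) ≠ a := by
  intro t
  induction t with
  | zero =>
    intro _ c hc hunf
    have hidx : 2*m - 1 - 0 = (m-1) + m := by omega
    rw [hidx, C.hper (m-1)] at hunf
    by_cases hca : c (f (m-1)) = a
    · obtain ⟨b, hbL, hbne, hbnb⟩ := hunf
      obtain ⟨hstep, hp⟩ := step_update G L hc hbL hbne hbnb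
      refine ⟨_, .single hstep, hp, ?_⟩
      rw [Function.update_self]
      rw [hca] at hbne
      exact hbne
    · exact ⟨c, .refl, hc, hca⟩
  | succ t ih =>
    intro htm c hc hunf
    by_cases hca : c (f (m-1)) = a
    case neg => exact ⟨c, .refl, hc, hca⟩
    case pos =>
    set u := 2*m - 2 - t with hu
    rw [show 2*m - 1 - (t+1) = u from by omega] at hunf
    by_cases hu1 : unfrozenAt G L c (f (u+1))
    · exact ih (by omega) c hc (by rw [show 2*m - 1 - t = u + 1 from by omega]; exact hu1)
    · have hfu : f u = f (m - 2 - t) := by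
        rw [show u = (m - 2 - t) + m from by omega]
        exact C.hper _
      have hfune : f u ≠ f (m-1) := by
        rw [hfu]
        exact C.fne (by omega) (by omega) (by omega)
      obtain ⟨hLeq, hd1, hd2, hd3⟩ :=
        frozen_char G L hc (C.hnbr u) (C.hL3 (f (u+1))) hu1
      obtain ⟨b, hbL, hbne, hbnb⟩ := hunf
      obtain ⟨hstep, hp1⟩ := step_update G L hc hbL hbne hbnb
      have hne_u1 : f (u+1) ≠ f u := (C.hadj u).ne'
      have hne_u2 : f (u+2) ≠ f u := C.hne2 u
      have hunf1 : unfrozenAt G L (Function.update c (f u) b) (f (u+1)) := by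
        refine ⟨c (f u), ?_, ?_, ?_⟩
        · rw [hLeq]; simp
        · rw [Function.update_of_ne hne_u1]
          exact hd1
        · intro w hw
          rcases C.nbhd u w hw with rfl | rfl
          · rw [Function.update_self]
            exact hbne
          · rw [Function.update_of_ne hne_u2]
            exact hd2.symm
      obtain ⟨c₂, hrtg2, hp2, hne2a⟩ := ih (by omega) _ hp1
        (by rw [show 2*m - 1 - t = u + 1 from by omega]; exact hunf1)
      exact ⟨c₂, (Relation.ReflTransGen.single hstep).trans hrtg2, hp2, hne2a⟩

lemma reachA (C : CycleCtx G L f m a) (c : V → ℕ) (hc : properL G L c)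
    (hcu : ∃ v, unfrozenAt G L c v) :
    ∃ c', Relation.ReflTransGen (recolStep G L) c c' ∧ properL G L c' ∧ c' (f 0) = a := by
  obtain ⟨v, hv⟩ := hcu
  obtain ⟨k, hkm, rfl⟩ := C.hsurj v
  have h1 : unfrozenAt G L c (f (2*m - 1 - (m - 1 - k))) := by
    rw [show 2*m - 1 - (m - 1 - k) = k + m from by omega, C.hper k]
    exact hv
  obtain ⟨c₁, hrtg1, hp1, hne1⟩ := lemE C (m - 1 - k) (by omega) c hc h1
  by_cases hc0 : c₁ (f 0) = a
  · exact ⟨c₁, hrtg1, hp1, hc0⟩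
  · have hnb : ∀ w, G.Adj (f 0) w → c₁ w ≠ a := by
      intro w hw
      have hw' : G.Adj (f (m - 1 + 1)) w := by
        rw [show m - 1 + 1 = m from by omega, C.fm0]
        exact hw
      have h := C.nbhd (m-1) w hw'
      rw [show m - 1 + 2 = m + 1 from by omega] at h
      rcases h with rfl | rfl
      · exact hne1
      · rw [show m + 1 = 1 + m from by omega, C.hper 1]
        exact fun he => C.haN (he ▸ hp1.1 (f 1))
    have haca : a ≠ c₁ (f 0) := fun he => hc0 he.symm
    obtain ⟨hstep, hp2⟩ := step_update G L hp1 C.haL haca hnb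
    refine ⟨_, hrtg1.trans (.single hstep), hp2, ?_⟩
    rw [Function.update_self]

end MainLemmas

lemma exists_adj_ne {V : Type*} {G : SimpleGraph V} (L : V → Finset ℕ) :
    ∀ {x y : V}, G.Walk x y → L x ≠ L y → ∃ p q, G.Adj p q ∧ L p ≠ L q := by
  intro x y w
  induction w with
  | nil => intro h; exact absurd rfl h
  | @cons x b y h' w' ih =>
    intro h
    by_cases hxb : L x = L b
    · exact ih (by rw [← hxb]; exact h)
    · exact ⟨x, b, h', hxb⟩

/-- `G` is a cycle: a connected finite graph on at least 3 vertices in which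
every vertex has degree 2. -/
theorem stmt13 {V : Type*} [Fintype V] (G : SimpleGraph V)
    (hn : 3 ≤ Fintype.card V) (hG : G.Connected)
    (hreg : ∀ v, (G.neighborSet v).ncard = 2)
    (L : V → Finset ℕ) (hL : ∀ v, 3 ≤ (L v).card)
    (hnotid : ∃ u v, L u ≠ L v)
    (α β : V → ℕ) (hα : properL G L α) (hβ : properL G L β)
    (hαu : ∃ v, unfrozenAt G L α v) (hβu : ∃ v, unfrozenAt G L β v) :
    Relation.ReflTransGen (recolStep G L) α β := by
  classical
  obtain ⟨u₀, v₀, hLuv⟩ := hnotid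
  obtain ⟨x, y, hxy, hLxy⟩ : ∃ x y, G.Adj x y ∧ L x ≠ L y := by
    obtain ⟨w⟩ := hG.preconnected u₀ v₀
    exact exists_adj_ne L w hLuv
  obtain ⟨p, q, hpq, a, hap, haq⟩ : ∃ p q, G.Adj p q ∧ ∃ a', a' ∈ L p ∧ a' ∉ L q := by
    by_cases hsub : L x ⊆ L y
    · have hns : ¬ L y ⊆ L x := fun h => hLxy (Finset.Subset.antisymm hsub h)
      obtain ⟨a', ha1, ha2⟩ := Finset.not_subset.mp hns
      exact ⟨y, x, hxy.symm, a', ha1, ha2⟩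
    · obtain ⟨a', ha1, ha2⟩ := Finset.not_subset.mp hsub
      exact ⟨x, y, hxy, a', ha1, ha2⟩
  obtain ⟨m, f, hm3, hf0, hf1, hadjf, hnbrf, hne2f, hperf, hinjf, hsurjf⟩ :=
    cycle_exists hG hreg hpq
  have C : CycleCtx G L f m a :=
    ⟨hm3, hadjf, hnbrf, hne2f, hperf, hinjf, hsurjf, hL,
      by rw [hf0]; exact hap, by rw [hf1]; exact haq⟩
  obtain ⟨α₁, hra, hpa, ha0⟩ := reachA C α hα hαu
  obtain ⟨β₁, hrb, hpb, hb0⟩ := reachA C β hβ hβu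
  have hAB : Relation.ReflTransGen (recolStep G L) α₁ β₁ := by
    apply lemA C (m-1) (by omega) α₁ β₁ hpa hpb ha0 hb0
    intro j hj hjm
    have hjme : j = m := by omega
    subst hjme
    rw [C.fm0, ha0, hb0]
  have hsym : Symmetric (recolStep G L) := by
    rintro c c' ⟨h1, h2, x', hx, ho⟩
    exact ⟨h2, h1, x', hx.symm, fun u hu => (ho u hu).symm⟩
  exact (hra.trans hAB).trans (letI : Std.Symm (recolStep G L) := ⟨hsym⟩; Relation.ReflTransGen.symmetric.symm _ _ hrb)
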